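/- Let I ⊆ ℝ be an open interval and let A : I → ℝ be twice continuously differentiable with A(u) > 0 for all u ∈ I, satisfying the differential equation 12 A A'' − 15 (A')² − 64 A³ = 0 on I. Then there exist u₀ ∈ ℝ and λ > 0 such that either A(u) = (3/16)(u − u₀)⁻² for all u ∈ I, or A(u) = λ²(λ²(u − u₀)² − 4/3)⁻² for all u ∈ I. Conversely, each function of either of these two forms is positive and satisfies 12 A A'' − 15 (A')² − 64 A³ = 0 on any open interval on which it is defined. -/

import Mathlib

noncomputable section

lemma fam1_deriv (u₀ u : ℝ) (hu : u ≠ u₀) :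
    HasDerivAt (fun s : ℝ => 3 / 16 / (s - u₀) ^ 2) (-(3/8) / (u - u₀)^3) u := by
  have h : u - u₀ ≠ 0 := sub_ne_zero.2 hu
  have hd : HasDerivAt (fun s : ℝ => (s - u₀)^2) (2 * (u - u₀)) u := by
    simpa using ((hasDerivAt_id u).sub_const u₀).fun_pow 2
  have := (hasDerivAt_const u ((3:ℝ)/16)).fun_div hd (pow_ne_zero 2 h)
  convert this using 1
  · rfl
  · rfl
  field_simp; ring

lemma fam1_deriv2 (u₀ u : ℝ) (hu : u ≠ u₀) :
    HasDerivAt (fun s : ℝ => -(3/8) / (s - u₀) ^ 3) ((9/8) / (u - u₀)^4) u := by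
  have h : u - u₀ ≠ 0 := sub_ne_zero.2 hu
  have hd : HasDerivAt (fun s : ℝ => (s - u₀)^3) (3 * (u - u₀)^2) u := by
    simpa using ((hasDerivAt_id u).sub_const u₀).fun_pow 3
  have := (hasDerivAt_const u (-(3:ℝ)/8)).fun_div hd (pow_ne_zero 3 h)
  convert this using 1
  · rfl
  · rfl
  · ext s; ring_nf
  field_simp; ring

lemma fam1 (u₀ : ℝ) (u : ℝ) (hu : u ≠ u₀) :
    0 < (fun s => 3 / 16 / (s - u₀) ^ 2) u ∧
      12 * (fun s => 3 / 16 / (s - u₀) ^ 2) u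
          * deriv (deriv (fun s : ℝ => 3 / 16 / (s - u₀) ^ 2)) u
        - 15 * (deriv (fun s : ℝ => 3 / 16 / (s - u₀) ^ 2) u) ^ 2
        - 64 * ((fun s => 3 / 16 / (s - u₀) ^ 2) u) ^ 3 = 0 := by
  have h : u - u₀ ≠ 0 := sub_ne_zero.2 hu
  constructor
  · exact div_pos (by norm_num) (by positivity)
  have hev : deriv (fun s : ℝ => 3 / 16 / (s - u₀) ^ 2)
      =ᶠ[nhds u] (fun s : ℝ => -(3/8) / (s - u₀) ^ 3) := by
    filter_upwards [isOpen_ne_fun continuous_id continuous_const |>.mem_nhds hu] with s hs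
    exact (fam1_deriv u₀ s hs).deriv
  have h1 : deriv (fun s : ℝ => 3 / 16 / (s - u₀) ^ 2) u = -(3/8) / (u - u₀)^3 :=
    (fam1_deriv u₀ u hu).deriv
  have h2 : deriv (deriv (fun s : ℝ => 3 / 16 / (s - u₀) ^ 2)) u = (9/8) / (u - u₀)^4 := by
    rw [hev.deriv_eq]
    exact (fam1_deriv2 u₀ u hu).deriv
  simp only [h1, h2]
  field_simp
  ring

lemma fam2_deriv (lam u₀ u : ℝ) (hD : lam ^ 2 * (u - u₀) ^ 2 - 4 / 3 ≠ 0) :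
    HasDerivAt (fun s : ℝ => lam ^ 2 / (lam ^ 2 * (s - u₀) ^ 2 - 4 / 3) ^ 2)
      (-(4 * lam ^ 4 * (u - u₀)) / (lam ^ 2 * (u - u₀) ^ 2 - 4 / 3) ^ 3) u := by
  have hDd : HasDerivAt (fun s : ℝ => lam ^ 2 * (s - u₀) ^ 2 - 4 / 3)
      (lam ^ 2 * (2 * (u - u₀))) u := by
    simpa using ((((hasDerivAt_id u).sub_const u₀).pow 2).const_mul (lam^2)).sub_const (4/3)
  have hd : HasDerivAt (fun s : ℝ => (lam ^ 2 * (s - u₀) ^ 2 - 4 / 3) ^ 2)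
      (2 * (lam ^ 2 * (u - u₀) ^ 2 - 4 / 3) * (lam ^ 2 * (2 * (u - u₀)))) u := by
    simpa [mul_comm] using (hDd.fun_pow 2)
  have := (hasDerivAt_const u (lam ^ 2)).fun_div hd (pow_ne_zero 2 hD)
  convert this using 1
  · rfl
  · rfl
  set D := lam ^ 2 * (u - u₀) ^ 2 - 4 / 3 with hDdef
  field_simp
  ring

lemma fam2_deriv2 (lam u₀ u : ℝ) (hD : lam ^ 2 * (u - u₀) ^ 2 - 4 / 3 ≠ 0) :
    HasDerivAt (fun s : ℝ => -(4 * lam ^ 4 * (s - u₀)) / (lam ^ 2 * (s - u₀) ^ 2 - 4 / 3) ^ 3)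
      ((-(4 * lam ^ 4) * ((lam ^ 2 * (u - u₀) ^ 2 - 4 / 3) - 6 * lam ^ 2 * (u - u₀) ^ 2))
        / (lam ^ 2 * (u - u₀) ^ 2 - 4 / 3) ^ 4) u := by
  have hDd : HasDerivAt (fun s : ℝ => lam ^ 2 * (s - u₀) ^ 2 - 4 / 3)
      (lam ^ 2 * (2 * (u - u₀))) u := by
    simpa using ((((hasDerivAt_id u).sub_const u₀).pow 2).const_mul (lam^2)).sub_const (4/3)
  have hd : HasDerivAt (fun s : ℝ => (lam ^ 2 * (s - u₀) ^ 2 - 4 / 3) ^ 3)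
      (3 * (lam ^ 2 * (u - u₀) ^ 2 - 4 / 3) ^ 2 * (lam ^ 2 * (2 * (u - u₀)))) u := by
    simpa [mul_comm] using (hDd.fun_pow 3)
  have hn : HasDerivAt (fun s : ℝ => -(4 * lam ^ 4 * (s - u₀))) (-(4 * lam ^ 4)) u := by
    simpa using (((hasDerivAt_id u).sub_const u₀).const_mul (4 * lam ^ 4)).fun_neg
  have := hn.fun_div hd (pow_ne_zero 3 hD)
  convert this using 1
  · rfl
  · rfl
  set D := lam ^ 2 * (u - u₀) ^ 2 - 4 / 3 with hDdef
  field_simp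
  ring

lemma fam2_alg (lam t D : ℝ) (hD : D ≠ 0) (h : D = lam ^ 2 * t ^ 2 - 4 / 3) :
    12 * (lam ^ 2 / D ^ 2) * (-(4 * lam ^ 4) * (D - 6 * lam ^ 2 * t ^ 2) / D ^ 4)
      - 15 * (-(4 * lam ^ 4 * t) / D ^ 3) ^ 2 - 64 * (lam ^ 2 / D ^ 2) ^ 3 = 0 := by
  field_simp
  linear_combination (-48 * lam ^ 6) * h

lemma fam2 (lam u₀ : ℝ) (hlam : 0 < lam) (u : ℝ) (hD : lam ^ 2 * (u - u₀) ^ 2 - 4 / 3 ≠ 0) :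
    0 < (fun s => lam ^ 2 / (lam ^ 2 * (s - u₀) ^ 2 - 4 / 3) ^ 2) u ∧
      12 * (fun s => lam ^ 2 / (lam ^ 2 * (s - u₀) ^ 2 - 4 / 3) ^ 2) u
          * deriv (deriv (fun s : ℝ => lam ^ 2 / (lam ^ 2 * (s - u₀) ^ 2 - 4 / 3) ^ 2)) u
        - 15 * (deriv (fun s : ℝ => lam ^ 2 / (lam ^ 2 * (s - u₀) ^ 2 - 4 / 3) ^ 2) u) ^ 2
        - 64 * ((fun s => lam ^ 2 / (lam ^ 2 * (s - u₀) ^ 2 - 4 / 3) ^ 2) u) ^ 3 = 0 := by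
  constructor
  · exact div_pos (by positivity) (by positivity)
  have hopen : IsOpen {s : ℝ | lam ^ 2 * (s - u₀) ^ 2 - 4 / 3 ≠ 0} := by
    apply isOpen_ne_fun _ continuous_const
    continuity
  have hev : deriv (fun s : ℝ => lam ^ 2 / (lam ^ 2 * (s - u₀) ^ 2 - 4 / 3) ^ 2)
      =ᶠ[nhds u] (fun s : ℝ => -(4 * lam ^ 4 * (s - u₀)) / (lam ^ 2 * (s - u₀) ^ 2 - 4 / 3) ^ 3) := by
    filter_upwards [hopen.mem_nhds hD] with s hs
    exact (fam2_deriv lam u₀ s hs).deriv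
  have h1 := (fam2_deriv lam u₀ u hD).deriv
  have h2 : deriv (deriv (fun s : ℝ => lam ^ 2 / (lam ^ 2 * (s - u₀) ^ 2 - 4 / 3) ^ 2)) u
      = (-(4 * lam ^ 4) * ((lam ^ 2 * (u - u₀) ^ 2 - 4 / 3) - 6 * lam ^ 2 * (u - u₀) ^ 2))
        / (lam ^ 2 * (u - u₀) ^ 2 - 4 / 3) ^ 4 := by
    rw [hev.deriv_eq]
    exact (fam2_deriv2 lam u₀ u hD).deriv
  simp only [h1, h2]
  exact fam2_alg lam (u - u₀) _ hD rfl

lemma const_of_deriv0 {I : Set ℝ} (hIopen : IsOpen I) (hconv : Convex ℝ I) {f : ℝ → ℝ}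
    (hf : ∀ u ∈ I, HasDerivAt f 0 u) : ∀ x ∈ I, ∀ y ∈ I, f x = f y := by
  intro x hx y hy
  refine hconv.is_const_of_fderivWithin_eq_zero
    (fun u hu => ((hf u hu).differentiableAt).differentiableWithinAt)
    (fun u hu => ?_) hx hy
  have h2 := (hf u hu).hasFDerivAt.hasFDerivWithinAt.fderivWithin (hIopen.uniqueDiffOn u hu)
  rw [h2]; ext; simp

/-- classification of positive solutions of
`12 A A'' - 15 (A')² - 64 A³ = 0` on an open interval: they are exactly the functions
`A(u) = (3/16)(u-u₀)⁻²` and `A(u) = λ²(λ²(u-u₀)² - 4/3)⁻²` (with `λ > 0`), and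
conversely each such function is positive and solves the equation wherever defined. -/
theorem stmt13 (I : Set ℝ) (hIopen : IsOpen I) (hIconn : I.OrdConnected)
    (A : ℝ → ℝ) (hA : ContDiffOn ℝ 2 A I) (hpos : ∀ u ∈ I, 0 < A u)
    (hode : ∀ u ∈ I,
      12 * A u * deriv (deriv A) u - 15 * (deriv A u) ^ 2 - 64 * (A u) ^ 3 = 0) :
    (∃ (u₀ lam : ℝ), 0 < lam ∧
      ((∀ u ∈ I, A u = 3 / 16 / (u - u₀) ^ 2) ∨
       (∀ u ∈ I, A u = lam ^ 2 / (lam ^ 2 * (u - u₀) ^ 2 - 4 / 3) ^ 2))) ∧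
    (∀ (u₀ lam : ℝ), 0 < lam →
      (∀ u : ℝ, u ≠ u₀ →
        (0 < (fun s => 3 / 16 / (s - u₀) ^ 2) u ∧
          12 * (fun s => 3 / 16 / (s - u₀) ^ 2) u
              * deriv (deriv (fun s => 3 / 16 / (s - u₀) ^ 2)) u
            - 15 * (deriv (fun s => 3 / 16 / (s - u₀) ^ 2) u) ^ 2
            - 64 * ((fun s => 3 / 16 / (s - u₀) ^ 2) u) ^ 3 = 0)) ∧
      (∀ u : ℝ, lam ^ 2 * (u - u₀) ^ 2 - 4 / 3 ≠ 0 →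
        (0 < (fun s => lam ^ 2 / (lam ^ 2 * (s - u₀) ^ 2 - 4 / 3) ^ 2) u ∧
          12 * (fun s => lam ^ 2 / (lam ^ 2 * (s - u₀) ^ 2 - 4 / 3) ^ 2) u
              * deriv (deriv (fun s => lam ^ 2 / (lam ^ 2 * (s - u₀) ^ 2 - 4 / 3) ^ 2)) u
            - 15 * (deriv (fun s => lam ^ 2 / (lam ^ 2 * (s - u₀) ^ 2 - 4 / 3) ^ 2) u) ^ 2
            - 64 * ((fun s => lam ^ 2 / (lam ^ 2 * (s - u₀) ^ 2 - 4 / 3) ^ 2) u) ^ 3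
            = 0))) := by
  refine ⟨?_, fun u₀ lam hlam => ⟨fun u hu => fam1 u₀ u hu, fun u hD => fam2 lam u₀ hlam u hD⟩⟩

  rcases Set.eq_empty_or_nonempty I with hI | ⟨x₀, hx₀⟩
  · exact ⟨0, 1, one_pos, Or.inl (by simp [hI])⟩
  have hconv : Convex ℝ I := hIconn.convex
  have hdiffA : DifferentiableOn ℝ A I := hA.differentiableOn (by norm_num)
  have hA1' : ContDiffOn ℝ 1 (deriv A) I := hA.deriv_of_isOpen hIopen (by norm_num)
  have hdiffA1 : DifferentiableOn ℝ (deriv A) I := hA1'.differentiableOn (by norm_num)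
  have hA1 : ∀ u ∈ I, HasDerivAt A (deriv A u) u := fun u hu =>
    (hdiffA.differentiableAt (hIopen.mem_nhds hu)).hasDerivAt
  have hA2 : ∀ u ∈ I, HasDerivAt (deriv A) (deriv (deriv A) u) u := fun u hu =>
    (hdiffA1.differentiableAt (hIopen.mem_nhds hu)).hasDerivAt
  set W : ℝ → ℝ := fun v => (Real.sqrt (A v))⁻¹ with hWdef
  set W1 : ℝ → ℝ := fun v => -(deriv A v) / (2 * Real.sqrt (A v) ^ 3) with hW1def
  set W2 : ℝ → ℝ := fun v =>
    -(deriv (deriv A) v) / (2 * Real.sqrt (A v) ^ 3)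
      + (3/4) * (deriv A v)^2 / (Real.sqrt (A v))^5 with hW2def
  set F : ℝ → ℝ := fun v => ((W1 v)^2 - 16/3) / (4 * W v) with hFdef
  have hs0 : ∀ u ∈ I, 0 < Real.sqrt (A u) := fun u hu => Real.sqrt_pos.2 (hpos u hu)
  have hsq : ∀ u ∈ I, Real.sqrt (A u) ^ 2 = A u := fun u hu => Real.sq_sqrt (hpos u hu).le
  have hWpos : ∀ u ∈ I, 0 < W u := fun u hu => by
    simp only [hWdef]; exact inv_pos.2 (hs0 u hu)
  have hsder : ∀ u ∈ I, HasDerivAt (fun v => Real.sqrt (A v))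
      (deriv A u / (2 * Real.sqrt (A u))) u := fun u hu => (hA1 u hu).sqrt (hpos u hu).ne'
  have hWd : ∀ u ∈ I, HasDerivAt W (W1 u) u := by
    intro u hu
    have := (hsder u hu).fun_inv (hs0 u hu).ne'
    convert this using 1
    · rfl
    · rfl
    have h0 := (hs0 u hu).ne'
    simp only [hW1def]
    field_simp
    try ring
    try tauto
  have hW1d : ∀ u ∈ I, HasDerivAt W1 (W2 u) u := by
    intro u hu
    have h0 := (hs0 u hu).ne'
    have hden : HasDerivAt (fun v => 2 * Real.sqrt (A v) ^ 3)
        (2 * (3 * Real.sqrt (A u) ^ 2 * (deriv A u / (2 * Real.sqrt (A u))))) u := by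
      simpa [mul_comm, mul_assoc, mul_left_comm] using (((hsder u hu).pow 3).const_mul 2)
    have hnum : HasDerivAt (fun v => -(deriv A v)) (-(deriv (deriv A) u)) u := (hA2 u hu).neg
    have := hnum.fun_div hden (by positivity)
    convert this using 1
    · rfl
    · rfl
    simp only [hW2def]
    field_simp
    ring
  have key1 : ∀ u ∈ I, W2 u = 2 * F u := by
    intro u hu
    have h4 := hode u hu
    simp only [hW2def, hFdef, hW1def, hWdef]
    set s := Real.sqrt (A u) with hsdef
    have hs0' : s ≠ 0 := (hs0 u hu).ne'
    have hsq' : s ^ 2 = A u := hsq u hu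
    rw [← hsq'] at h4
    field_simp
    linear_combination (-1) * h4
  have hFd : ∀ u ∈ I, HasDerivAt F 0 u := by
    intro u hu
    have hWne : W u ≠ 0 := (hWpos u hu).ne'
    have hnum : HasDerivAt (fun v => (W1 v)^2 - 16/3) (2 * W1 u * W2 u) u := by
      simpa [mul_comm, mul_assoc, mul_left_comm] using ((hW1d u hu).fun_pow 2).sub_const (16/3)
    have hden : HasDerivAt (fun v => 4 * W v) (4 * W1 u) u := (hWd u hu).const_mul 4
    have := hnum.fun_div hden (by simpa using hWne)
    have hW2eq : W2 u = 2 * (((W1 u)^2 - 16/3) / (4 * W u)) := by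
      rw [key1 u hu]
    convert this using 1
    · rfl
    · rfl
    rw [hW2eq]
    field_simp
    ring
  obtain ⟨c, hFc⟩ : ∃ c, ∀ u ∈ I, F u = c :=
    ⟨F x₀, fun u hu => const_of_deriv0 hIopen hconv hFd u hu x₀ hx₀⟩
  have hW2c : ∀ u ∈ I, W2 u = 2 * c := fun u hu => by rw [key1 u hu, hFc u hu]
  have hGd : ∀ u ∈ I, HasDerivAt (fun v => W1 v - 2 * c * v) 0 u := by
    intro u hu
    have hlin : HasDerivAt (fun v : ℝ => 2 * c * v) (2 * c) u := by
      simpa using (hasDerivAt_id u).const_mul (2 * c)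
    have h2 := (hW1d u hu).fun_sub hlin
    rw [hW2c u hu] at h2
    simpa using h2
  obtain ⟨b, hGb⟩ : ∃ b, ∀ u ∈ I, W1 u - 2 * c * u = b :=
    ⟨W1 x₀ - 2 * c * x₀, fun u hu => const_of_deriv0 hIopen hconv hGd u hu x₀ hx₀⟩
  have hW1eq : ∀ u ∈ I, W1 u = 2 * c * u + b := fun u hu => by
    have := hGb u hu; linarith
  have hHd : ∀ u ∈ I, HasDerivAt (fun v => W v - (c * v^2 + b * v)) 0 u := by
    intro u hu
    have h2 : HasDerivAt (fun v : ℝ => c * v^2 + b * v) (2 * c * u + b) u := by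
      have p1 : HasDerivAt (fun v : ℝ => c * v^2) (c * (2 * u)) u := by
        simpa using ((hasDerivAt_pow 2 u).const_mul c)
      have p2 : HasDerivAt (fun v : ℝ => b * v) b u := by
        simpa using (hasDerivAt_id u).const_mul b
      convert p1.fun_add p2 using 1; rfl; rfl; ring
    have h3 := (hWd u hu).fun_sub h2
    rw [hW1eq u hu] at h3
    simpa using h3
  obtain ⟨d, hHd'⟩ : ∃ d, ∀ u ∈ I, W u - (c * u^2 + b * u) = d :=
    ⟨W x₀ - (c * x₀^2 + b * x₀), fun u hu => const_of_deriv0 hIopen hconv hHd u hu x₀ hx₀⟩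
  have hWeq : ∀ u ∈ I, W u = c * u^2 + b * u + d := fun u hu => by
    have := hHd' u hu; linarith
  have hAeq : ∀ u ∈ I, A u = ((W u)^2)⁻¹ := by
    intro u hu
    have h2 : (W u)^2 = (A u)⁻¹ := by
      simp only [hWdef]
      rw [inv_pow, hsq u hu]
    rw [h2, inv_inv]
  have hb2 : b^2 = 4 * c * d + 16/3 := by
    have h := hFc x₀ hx₀
    simp only [hFdef] at h
    rw [hW1eq x₀ hx₀, hWeq x₀ hx₀] at h
    have hWx : (0:ℝ) < c * x₀^2 + b * x₀ + d := by
      have := hWpos x₀ hx₀; rw [hWeq x₀ hx₀] at this; exact this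
    rw [div_eq_iff (by positivity)] at h
    nlinarith [h]
  by_cases hc : c = 0
  · -- first family
    have hb16 : b^2 = 16/3 := by rw [hb2, hc]; ring
    have hbne : b ≠ 0 := by
      intro h; rw [h] at hb16; norm_num at hb16
    refine ⟨-d/b, 1, one_pos, Or.inl ?_⟩
    intro u hu
    have hWu : W u = b * u + d := by rw [hWeq u hu, hc]; ring
    have hBne : b * u + d ≠ 0 := by rw [← hWu]; exact (hWpos u hu).ne'
    rw [hAeq u hu, hWu]
    have hsub : u - (-d/b) = (b * u + d)/b := by field_simp; ring
    rw [hsub]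
    field_simp
    linear_combination (-3) * hb16
  · -- second family
    refine ⟨-b/(2*c), |c|, abs_pos.2 hc, Or.inr ?_⟩
    intro u hu
    rw [sq_abs]
    have hPne : c * u^2 + b * u + d ≠ 0 := by
      rw [← hWeq u hu]; exact (hWpos u hu).ne'
    have hden : c^2 * (u - (-b/(2*c)))^2 - 4/3 = c * (c * u^2 + b * u + d) := by
      field_simp
      linear_combination 3 * hb2
    rw [hAeq u hu, hWeq u hu, hden, mul_pow]
    rw [eq_div_iff (by positivity)]
    field_simp
    rw [show u * (c * u + b) + d = c * u ^ 2 + b * u + d by ring]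
    exact div_self hPne

end
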